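/- Let Ψ : (0,∞) → ℝ be concave, and suppose Ψ(x) = -(2/(3π²)) x³ + r(x) with r(x) = o(x³) as x → ∞. Then for every ρ > 0 there exists x₀ such that for all x ≥ x₀ and all t ∈ (0,1], |Ψ(x - t) - Ψ(x) - (2t/π²) x²| ≤ ρ t x². -/

import Mathlib

open Filter Asymptotics

private lemma auxA (c ρ ε : ℝ) (hρ : 0 < ρ) (hε : 0 < ε) (hε2 : ε ≤ 1/2)
    (hle : ε * (9*c+1) ≤ ρ) :
    c*(3*ε+3*ε^2+ε^3) + (ρ*ε/9)*((1+ε)^3+1) ≤ (3*c+ρ)*ε := by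
  have h9 : 9*(c*ε) ≤ ρ := by nlinarith
  nlinarith [mul_le_mul_of_nonneg_right h9 hε.le, mul_pos hρ hε, sq_nonneg ε,
    mul_nonneg (mul_nonneg hρ.le hε.le) (sq_nonneg ε),
    mul_le_mul_of_nonneg_right h9 (sq_nonneg ε)]

private lemma auxB (c ρ ε : ℝ) (hc : 0 < c) (hρ : 0 < ρ) (hε : 0 < ε) (hε2 : ε ≤ 1/2)
    (hle : ε * (9*c+1) ≤ ρ) :
    (ρ*ε/9)*((1-ε/2)^3+(1-ε)^3) + c*((9/4)*ε^2 - (7/8)*ε^3) ≤ ρ*ε/2 := by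
  have h9 : 9*(c*ε) ≤ ρ := by nlinarith
  nlinarith [mul_le_mul_of_nonneg_right h9 hε.le, mul_pos hρ hε, sq_nonneg ε,
    mul_nonneg (mul_nonneg hρ.le hε.le) (sq_nonneg ε),
    mul_le_mul_of_nonneg_right h9 (sq_nonneg ε),
    mul_nonneg (mul_nonneg hc.le hε.le) (sq_nonneg ε)]

private lemma aux1 (c ρ ε x : ℝ) (hρ : 0 < ρ) (hε : 0 < ε) (hε2 : ε ≤ 1/2)
    (hle : ε * (9*c+1) ≤ ρ) (hx : 0 < x) :
    -(3*c+ρ)*x^2*(ε*x) ≤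
      (-c*((1+ε)*x)^3 - (ρ*ε/9)*((1+ε)*x)^3) - (-c*x^3 + (ρ*ε/9)*x^3) := by
  have hA := auxA c ρ ε hρ hε hε2 hle
  nlinarith [mul_le_mul_of_nonneg_right hA (pow_pos hx 3).le]

private lemma aux2 (c ρ ε x : ℝ) (hc : 0 < c) (hρ : 0 < ρ) (hε : 0 < ε) (hε2 : ε ≤ 1/2)
    (hle : ε * (9*c+1) ≤ ρ) (hx : 0 < x) :
    (-c*((1-ε/2)*x)^3 + (ρ*ε/9)*((1-ε/2)*x)^3)
      - (-c*((1-ε)*x)^3 - (ρ*ε/9)*((1-ε)*x)^3) ≤ (-(3*c)+ρ)*x^2*(ε/2*x) := by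
  have hB := auxB c ρ ε hc hρ hε hε2 hle
  nlinarith [mul_le_mul_of_nonneg_right hB (pow_pos hx 3).le]

/-- If `Ψ` is concave on `(0,∞)` and
`Ψ(x) = -(2/(3π²)) x³ + o(x³)` as `x → ∞`, then for every `ρ > 0` there is `x₀`
such that for all `x ≥ x₀` and `t ∈ (0,1]`,
`|Ψ(x-t) - Ψ(x) - (2t/π²) x²| ≤ ρ t x²`. -/
theorem stmt10 (Ψ : ℝ → ℝ) (hconc : ConcaveOn ℝ (Set.Ioi 0) Ψ)
    (hr : (fun x : ℝ => Ψ x + 2 / (3 * Real.pi ^ 2) * x ^ 3) =o[atTop]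
      fun x : ℝ => x ^ 3) :
    ∀ ρ > (0:ℝ), ∃ x₀ : ℝ, ∀ x ≥ x₀, ∀ t ∈ Set.Ioc (0:ℝ) 1,
      |Ψ (x - t) - Ψ x - 2 * t / Real.pi ^ 2 * x ^ 2| ≤ ρ * t * x ^ 2 := by
  intro ρ hρ
  set c : ℝ := 2 / (3 * Real.pi ^ 2) with hc
  have hπ : (0:ℝ) < Real.pi ^ 2 := by positivity
  have hcpos : 0 < c := by positivity
  set ε : ℝ := min (1/2) (ρ / (9 * c + 1)) with hε
  have hεpos : 0 < ε := lt_min (by norm_num) (by positivity)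
  have hεhalf : ε ≤ 1/2 := min_le_left _ _
  have hεle : ε * (9 * c + 1) ≤ ρ := by
    have h := min_le_right (1/2 : ℝ) (ρ / (9 * c + 1))
    calc ε * (9 * c + 1) ≤ (ρ / (9 * c + 1)) * (9 * c + 1) :=
          mul_le_mul_of_nonneg_right h (by positivity)
      _ = ρ := by field_simp
  have hηpos : 0 < ρ * ε / 9 := by positivity
  clear_value c ε
  clear hε
  obtain ⟨X, hX⟩ := (hr.def hηpos).exists_forall_of_atTop
  refine ⟨max (2 * max X 1) (8 / ε), ?_⟩
  intro x hx t ht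
  obtain ⟨ht0, ht1⟩ := ht
  have hx8 : 8 / ε ≤ x := le_trans (le_max_right _ _) hx
  have h16 : (16:ℝ) ≤ 8 / ε := by rw [le_div_iff₀ hεpos]; linarith
  have hx16 : (16:ℝ) ≤ x := le_trans h16 hx8
  have hxpos : (0:ℝ) < x := by linarith
  have hεx : 8 ≤ ε * x := by rw [div_le_iff₀ hεpos] at hx8; linarith
  have hx2X : 2 * max X 1 ≤ x := le_trans (le_max_left _ _) hx
  have hM1 : (1:ℝ) ≤ max X 1 := le_max_right _ _
  have hbnd : ∀ y : ℝ, max X 1 ≤ y →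
      -c * y^3 - (ρ*ε/9) * y^3 ≤ Ψ y ∧ Ψ y ≤ -c * y^3 + (ρ*ε/9) * y^3 := by
    intro y hy
    have h1 : X ≤ y := le_trans (le_max_left _ _) hy
    have h2 : (1:ℝ) ≤ y := le_trans (le_max_right _ _) hy
    have h3 := hX y h1
    rw [Real.norm_eq_abs, Real.norm_eq_abs,
      abs_of_nonneg (by positivity : (0:ℝ) ≤ y^3)] at h3
    have habs := abs_le.mp h3
    constructor <;> linarith [habs.1, habs.2]
  have ha' : (0:ℝ) ≤ (1/2 - ε) * x := mul_nonneg (by linarith) hxpos.le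
  have ha : max X 1 ≤ (1 - ε) * x := by linarith
  have hb : max X 1 ≤ (1 - ε/2) * x := by linarith
  have hxX : max X 1 ≤ x := by linarith
  have hεx2 : (0:ℝ) < ε * x := mul_pos hεpos hxpos
  have hpx : max X 1 ≤ (1 + ε) * x := by linarith
  obtain ⟨hΨa, -⟩ := hbnd _ ha
  obtain ⟨-, hΨb⟩ := hbnd _ hb
  obtain ⟨-, hΨx⟩ := hbnd _ hxX
  obtain ⟨hΨp, -⟩ := hbnd _ hpx
  have hxt : (0:ℝ) < x - t := by linarith
  have haI : (1 - ε) * x ∈ Set.Ioi (0:ℝ) := by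
    simp only [Set.mem_Ioi]; linarith
  have hxtI : x - t ∈ Set.Ioi (0:ℝ) := hxt
  have hpI : (1 + ε) * x ∈ Set.Ioi (0:ℝ) := by
    simp only [Set.mem_Ioi]; linarith
  have hbx : (1 - ε/2) * x < x - t := by linarith
  have hab : (1 - ε) * x < (1 - ε/2) * x := by linarith
  have hxp : x < (1 + ε) * x := by linarith
  have hlow : (Ψ ((1+ε)*x) - Ψ x) / ((1+ε)*x - x) ≤ (Ψ x - Ψ (x - t)) / (x - (x - t)) :=
    hconc.slope_anti_adjacent hxtI hpI (by linarith) hxp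
  have hmid : (Ψ x - Ψ (x-t)) / (x - (x-t)) ≤
      (Ψ (x-t) - Ψ ((1 - ε/2)*x)) / (x - t - (1 - ε/2)*x) :=
    hconc.slope_anti_adjacent (Set.mem_Ioi.mpr (lt_trans (Set.mem_Ioi.mp haI) hab))
      (Set.mem_Ioi.mpr hxpos) hbx (by linarith)
  have hhigh : (Ψ (x-t) - Ψ ((1 - ε/2)*x)) / (x - t - (1 - ε/2)*x)
      ≤ (Ψ ((1 - ε/2)*x) - Ψ ((1-ε)*x)) / ((1 - ε/2)*x - (1-ε)*x) :=
    hconc.slope_anti_adjacent haI hxtI hab hbx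
  set s : ℝ := (Ψ x - Ψ (x - t)) / t with hs
  have hsl : (Ψ ((1+ε)*x) - Ψ x) / (ε * x) ≤ s := by
    have h : (1+ε)*x - x = ε * x := by ring
    have h2 : x - (x - t) = t := by ring
    rw [h, h2] at hlow; exact hlow
  have hsu : s ≤ (Ψ ((1 - ε/2)*x) - Ψ ((1-ε)*x)) / (ε/2 * x) := by
    have h : (1 - ε/2)*x - (1-ε)*x = ε/2 * x := by ring
    have h2 : x - (x - t) = t := by ring
    rw [h2] at hmid; rw [h] at hhigh; exact le_trans hmid hhigh
  have hKey1 : -(3*c + ρ) * x^2 ≤ s := by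
    refine le_trans ?_ hsl
    rw [le_div_iff₀ hεx2]
    have h1 := aux1 c ρ ε x hρ hεpos hεhalf hεle hxpos
    linarith
  have hKey2 : s ≤ (-(3*c) + ρ) * x^2 := by
    refine le_trans hsu ?_
    rw [div_le_iff₀ (by positivity : (0:ℝ) < ε/2 * x)]
    have h2 := aux2 c ρ ε x hcpos hρ hεpos hεhalf hεle hxpos
    linarith
  have hts : Ψ (x - t) - Ψ x = -(t * s) := by
    rw [hs]; field_simp; ring
  have hKc : 2 * t / Real.pi ^ 2 * x ^ 2 = t * (3*c) * x^2 := by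
    rw [hc]; field_simp
  rw [abs_le]
  constructor
  · rw [hts, hKc]
    linarith [mul_le_mul_of_nonneg_left hKey2 ht0.le]
  · rw [hts, hKc]
    linarith [mul_le_mul_of_nonneg_left hKey1 ht0.le]
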